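/- arXiv:1112.0375 — 5 statements merged into one kernel-verified Lean document; each statement's English description precedes it below -/
import Mathlib

section
/- If R ↪ S is an algebra retract of reduced commutative rings (i.e., there is a ring homomorphism S → R whose composition with the inclusion R → S is the identity on R) and S is seminormal, then R is seminormal. -/
/-- If `R ↪ S` is an algebra retract of reduced commutative rings and `S` is seminormal,
then `R` is seminormal. -/
theorem stmt_1 (R S : Type) [CommRing R] [CommRing S] [IsReduced R] [IsReduced S]
    (f : R →+* S) (r : S →+* R) (hretract : r.comp f = RingHom.id R)
    (hS : ∀ x y : S, x ^ 2 = y ^ 3 → ∃ z : S, x = z ^ 3 ∧ y = z ^ 2) :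
    ∀ x y : R, x ^ 2 = y ^ 3 → ∃ z : R, x = z ^ 3 ∧ y = z ^ 2 := by
  intro x y hxy
  obtain ⟨z, hz1, hz2⟩ := hS (f x) (f y) (by rw [← map_pow, ← map_pow, hxy])
  refine ⟨r z, ?_, ?_⟩
  · have := congrArg r hz1
    rwa [← RingHom.comp_apply, hretract, RingHom.id_apply, map_pow] at this
  · have := congrArg r hz2
    rwa [← RingHom.comp_apply, hretract, RingHom.id_apply, map_pow] at this
end

section
/- Let M be an affine monoid (finitely generated submonoid of ℤ^d). If M is seminormal, then ℤM ∩ relint(ℝ₊M) ⊆ M, where relint denotes the relative interior of the cone ℝ₊M generated by M. -/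
open Finset in
/-- If an integer vector is a real linear combination of integer vectors (with coefficients
supported on a set), then it is a rational linear combination with the same support. -/
lemma ratCoeff {d : ℕ} {ι : Type} [Fintype ι] (v : ι → (Fin d → ℤ)) (x : Fin d → ℤ)
    (c : ι → ℝ) (hx : ∀ k, (x k : ℝ) = ∑ i, c i * (v i k : ℝ)) :
    ∃ q : ι → ℚ, (∀ i, c i = 0 → q i = 0) ∧ ∀ k, (x k : ℚ) = ∑ i, q i * (v i k : ℚ) := by
  classical
  set xq : Fin d → ℚ := fun k => (x k : ℚ) with hxq
  set vq : {i // c i ≠ 0} → (Fin d → ℚ) := fun j => fun k => ((v j.1 k : ℚ)) with hvq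
  have hmem : xq ∈ Submodule.span ℚ (Set.range vq) := by
    by_contra hnot
    obtain ⟨f, hf0, hfmap⟩ := Submodule.exists_dual_map_eq_bot_of_notMem hnot inferInstance
    set w : Fin d → ℚ := fun k => f (fun j => if k = j then 1 else 0) with hw
    have hfeq : ∀ y : Fin d → ℚ, f y = ∑ k, y k * w k := by
      intro y
      rw [LinearMap.pi_apply_eq_sum_univ]
      simp only [hw, smul_eq_mul]
    have hvw : ∀ j : {i // c i ≠ 0}, ∑ k, (v j.1 k : ℚ) * w k = 0 := by
      intro j
      have h1 : vq j ∈ Submodule.span ℚ (Set.range vq) := Submodule.subset_span ⟨j, rfl⟩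
      have h2 : f (vq j) ∈ (Submodule.span ℚ (Set.range vq)).map f :=
        Submodule.mem_map_of_mem h1
      rw [hfmap] at h2
      have h3 : f (vq j) = 0 := (Submodule.mem_bot ℚ).mp h2
      rw [hfeq] at h3
      simpa [hvq] using h3
    have hxw : ∑ k, (x k : ℚ) * w k ≠ 0 := by
      intro h
      apply hf0
      rw [hfeq]
      simpa [hxq] using h
    have hreal : ((∑ k, (x k : ℚ) * w k : ℚ) : ℝ) = 0 := by
      push_cast
      have e1 : ∑ k, (x k : ℝ) * ((w k : ℚ) : ℝ)
          = ∑ k, (∑ i, c i * (v i k : ℝ)) * ((w k : ℚ) : ℝ) :=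
        Finset.sum_congr rfl fun k _ => by rw [← hx k]
      rw [e1]
      simp_rw [Finset.sum_mul, mul_assoc]
      rw [Finset.sum_comm]
      simp_rw [← Finset.mul_sum]
      refine Finset.sum_eq_zero fun i _ => ?_
      by_cases hc : c i = 0
      · simp [hc]
      · have := hvw ⟨i, hc⟩
        have : ((∑ k, (v i k : ℚ) * w k : ℚ) : ℝ) = 0 := by rw [this]; simp
        push_cast at this
        rw [this, mul_zero]
    exact hxw (by exact_mod_cast hreal)
  obtain ⟨c', hc'⟩ := (Submodule.mem_span_range_iff_exists_fun ℚ).mp hmem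
  refine ⟨fun i => if h : c i = 0 then 0 else c' ⟨i, h⟩, fun i h => by simp [h], ?_⟩
  intro k
  have hk := congrFun hc' k
  simp only [Finset.sum_apply, Pi.smul_apply, smul_eq_mul] at hk
  have hsub : ∑ i ∈ univ.filter (fun i => c i ≠ 0),
      (if h : c i = 0 then 0 else c' ⟨i, h⟩) * (v i k : ℚ)
      = ∑ j : {i // c i ≠ 0}, c' j * (v j.1 k : ℚ) := by
    rw [Finset.sum_subtype (p := fun i => c i ≠ 0) (univ.filter (fun i => c i ≠ 0)) (by simp)
      (fun i => (if h : c i = 0 then 0 else c' ⟨i, h⟩) * (v i k : ℚ))]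
    refine Finset.sum_congr rfl fun j _ => ?_
    rw [dif_neg j.2]
  rw [← Finset.sum_filter_add_sum_filter_not univ (fun i => c i ≠ 0)
    (fun i => (if h : c i = 0 then 0 else c' ⟨i, h⟩) * (v i k : ℚ))]
  have hzero : ∑ i ∈ univ.filter (fun i => ¬ c i ≠ 0),
      (if h : c i = 0 then 0 else c' ⟨i, h⟩) * (v i k : ℚ) = 0 := by
    refine Finset.sum_eq_zero fun i hi => ?_
    simp only [Finset.mem_filter, not_not] at hi
    rw [dif_pos hi.2, zero_mul]
  rw [hzero, add_zero, hsub]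
  exact hk.symm

open Finset in
/-- A nonnegative real solution of a rational linear system yields a nonnegative
rational solution. -/
lemma nonnegRat {d : ℕ} {ι : Type} [Fintype ι] (v : ι → (Fin d → ℤ)) (x : Fin d → ℤ) :
    ∀ (n : ℕ) (c : ι → ℝ), (univ.filter fun i => c i ≠ 0).card ≤ n → (∀ i, 0 ≤ c i) →
    (∀ k, (x k : ℝ) = ∑ i, c i * (v i k : ℝ)) →
    ∃ q : ι → ℚ, (∀ i, 0 ≤ q i) ∧ ∀ k, (x k : ℚ) = ∑ i, q i * (v i k : ℚ) := by
  classical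
  intro n
  induction n with
  | zero =>
    intro c hcard _ hx
    have hall : ∀ i, c i = 0 := by
      intro i
      by_contra h
      have hmem : i ∈ univ.filter fun i => c i ≠ 0 := by simp [h]
      have := Finset.card_pos.mpr ⟨i, hmem⟩
      omega
    refine ⟨0, fun i => le_refl 0, fun k => ?_⟩
    have h0 : (x k : ℝ) = 0 := by
      rw [hx k]; exact Finset.sum_eq_zero fun i _ => by rw [hall i, zero_mul]
    have hx0 : x k = 0 := by exact_mod_cast h0
    simp [hx0]
  | succ n ih =>
    intro c hcard hc hx
    by_cases hdep : ∃ μ : ι → ℝ, (∀ i, c i = 0 → μ i = 0) ∧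
        (∀ k, ∑ i, μ i * (v i k : ℝ) = 0) ∧ ∃ i, μ i ≠ 0
    · -- dependent case
      obtain ⟨μ, hμsupp, hμdep, i0, hi0⟩ := hdep
      have hci0 : c i0 ≠ 0 := fun h => hi0 (hμsupp i0 h)
      have hμi0 : μ i0 ≠ 0 := hi0
      have hrep : ∀ k, ((v i0 k : ℝ)) = ∑ j : {i // i ≠ i0},
          (-μ j.1 / μ i0) * (v j.1 k : ℝ) := by
        intro k
        have h0 := hμdep k
        rw [← Finset.add_sum_erase univ _ (Finset.mem_univ i0)] at h0
        have herase : ∑ i ∈ univ.erase i0, μ i * (v i k : ℝ)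
            = ∑ j : {i // i ≠ i0}, μ j.1 * (v j.1 k : ℝ) :=
          Finset.sum_subtype (p := fun i => i ≠ i0) _ (by simp) _
        rw [herase] at h0
        have hfac : ∑ j : {i // i ≠ i0}, (-μ j.1 / μ i0) * (v j.1 k : ℝ)
            = (-(1:ℝ)/μ i0) * ∑ j : {i // i ≠ i0}, μ j.1 * (v j.1 k : ℝ) := by
          rw [Finset.mul_sum]
          refine Finset.sum_congr rfl fun j _ => ?_
          field_simp
        rw [hfac]
        have hS : ∑ j : {i // i ≠ i0}, μ j.1 * (v j.1 k : ℝ) = -(μ i0 * (v i0 k : ℝ)) := by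
          linarith
        rw [hS]
        field_simp
      obtain ⟨r, hrsupp, hr⟩ := ratCoeff (ι := {i // i ≠ i0}) (fun j => v j.1) (v i0)
        (fun j => -μ j.1 / μ i0) hrep
      set lam0 : ι → ℚ := fun i => if h : i = i0 then -1 else r ⟨i, h⟩ with hlam0
      have hlam0supp : ∀ i, c i = 0 → lam0 i = 0 := by
        intro i h
        have hne : i ≠ i0 := fun he => hci0 (he ▸ h)
        have : μ i = 0 := hμsupp i h
        simp only [hlam0, dif_neg hne]
        exact hrsupp ⟨i, hne⟩ (by simp [this])
      have hlam0dep : ∀ k, ∑ i, (lam0 i : ℚ) * (v i k : ℚ) = 0 := by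
        intro k
        rw [← Finset.add_sum_erase univ _ (Finset.mem_univ i0)]
        have herase : ∑ i ∈ univ.erase i0, lam0 i * (v i k : ℚ)
            = ∑ j : {i // i ≠ i0}, lam0 j.1 * (v j.1 k : ℚ) :=
          Finset.sum_subtype (p := fun i => i ≠ i0) _ (by simp) _
        rw [herase]
        have h1 : lam0 i0 = -1 := by simp [hlam0]
        have h2 : ∀ j : {i // i ≠ i0}, lam0 j.1 = r j := by
          intro j; simp only [hlam0, dif_neg j.2]
        simp_rw [h2, h1]
        rw [← hr k]
        ring
      have hlam0i0 : lam0 i0 = -1 := by simp [hlam0]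
      obtain ⟨lam, hlsupp, hldep, hlpos⟩ :
          ∃ lam : ι → ℚ, (∀ i, c i = 0 → lam i = 0) ∧
            (∀ k, ∑ i, (lam i : ℚ) * (v i k : ℚ) = 0) ∧ ∃ i, 0 < lam i := by
        by_cases hp : ∃ i, 0 < lam0 i
        · exact ⟨lam0, hlam0supp, hlam0dep, hp⟩
        · refine ⟨fun i => -lam0 i, fun i h => by simp [hlam0supp i h], fun k => ?_,
            ⟨i0, by simp [hlam0i0]⟩⟩
          have := hlam0dep k
          simp only [neg_mul, Finset.sum_neg_distrib]
          rw [this, neg_zero]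
      have hne : (univ.filter fun i => 0 < lam i).Nonempty := by
        obtain ⟨i, hi⟩ := hlpos; exact ⟨i, by simp [hi]⟩
      obtain ⟨i1, hi1mem, hi1min⟩ := Finset.exists_min_image
        (univ.filter fun i => 0 < lam i) (fun i => c i / ((lam i : ℝ))) hne
      rw [Finset.mem_filter] at hi1mem
      have hlami1 : 0 < lam i1 := hi1mem.2
      have hlami1R : (0:ℝ) < ((lam i1 : ℚ) : ℝ) := by exact_mod_cast hlami1
      set t : ℝ := c i1 / ((lam i1 : ℚ) : ℝ) with ht
      have ht0 : 0 ≤ t := div_nonneg (hc i1) hlami1R.le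
      set c2 : ι → ℝ := fun i => c i - t * ((lam i : ℚ) : ℝ) with hc2
      have hc2nonneg : ∀ i, 0 ≤ c2 i := by
        intro i
        by_cases hpos : 0 < lam i
        · have hmin := hi1min i (by simp [hpos])
          have hpR : (0:ℝ) < ((lam i : ℚ) : ℝ) := by exact_mod_cast hpos
          have h2 : t * ((lam i : ℚ) : ℝ) ≤ c i := (le_div_iff₀ hpR).mp hmin
          simp only [hc2]
          linarith
        · push_neg at hpos
          have hnp : ((lam i : ℚ) : ℝ) ≤ 0 := by exact_mod_cast hpos
          have := mul_nonpos_of_nonneg_of_nonpos ht0 hnp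
          simp only [hc2]
          linarith [hc i]
      have hc2x : ∀ k, (x k : ℝ) = ∑ i, c2 i * (v i k : ℝ) := by
        intro k
        have hdep0 : ∑ i, ((lam i : ℚ) : ℝ) * (v i k : ℝ) = 0 := by
          have h1 := hldep k
          have h2 : ((∑ i, lam i * (v i k : ℚ) : ℚ) : ℝ) = 0 := by rw [h1]; simp
          push_cast at h2
          exact h2
        simp only [hc2, sub_mul, Finset.sum_sub_distrib]
        rw [← hx k]
        have h3 : ∑ i, t * ((lam i : ℚ) : ℝ) * (v i k : ℝ)
            = t * ∑ i, ((lam i : ℚ) : ℝ) * (v i k : ℝ) := by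
          rw [Finset.mul_sum]
          refine Finset.sum_congr rfl fun i _ => by ring
        rw [h3, hdep0, mul_zero, sub_zero]
      have hsubset : (univ.filter fun i => c2 i ≠ 0) ⊆ (univ.filter fun i => c i ≠ 0).erase i1 := by
        intro i hi
        rw [Finset.mem_filter] at hi
        rw [Finset.mem_erase, Finset.mem_filter]
        refine ⟨?_, Finset.mem_univ _, ?_⟩
        · rintro rfl
          apply hi.2
          simp only [hc2, ht]
          field_simp
          simp
        · intro h
          apply hi.2
          have := hlsupp i h
          simp [hc2, h, this]
      have hcard2 : (univ.filter fun i => c2 i ≠ 0).card ≤ n := by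
        have h1 := Finset.card_le_card hsubset
        have h2 : i1 ∈ univ.filter fun i => c i ≠ 0 := by
          rw [Finset.mem_filter]
          refine ⟨Finset.mem_univ _, fun h => ?_⟩
          have := hlsupp i1 h
          rw [this] at hlami1
          exact lt_irrefl 0 hlami1
        have h3 := Finset.card_erase_of_mem h2
        omega
      exact ih c2 hcard2 hc2nonneg hc2x
    · -- independent case
      obtain ⟨q, hqsupp, hq⟩ := ratCoeff v x c hx
      refine ⟨q, fun i => ?_, hq⟩
      by_contra hneg
      push_neg at hneg
      have hqr : ∀ k, (x k : ℝ) = ∑ i, ((q i : ℚ) : ℝ) * (v i k : ℝ) := by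
        intro k
        have h1 := hq k
        have h2 : ((x k : ℚ) : ℝ) = ((∑ i, q i * (v i k : ℚ) : ℚ) : ℝ) := by rw [h1]
        push_cast at h2
        exact h2
      set μ : ι → ℝ := fun i => c i - ((q i : ℚ) : ℝ) with hμ
      have hμdep : ∀ k, ∑ i, μ i * (v i k : ℝ) = 0 := by
        intro k
        simp only [hμ, sub_mul, Finset.sum_sub_distrib]
        rw [← hx k, ← hqr k, sub_self]
      have hμsupp : ∀ i, c i = 0 → μ i = 0 := by
        intro i h
        simp [hμ, h, hqsupp i h]
      have hqiR : ((q i : ℚ) : ℝ) < 0 := by exact_mod_cast hneg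
      exact hdep ⟨μ, hμsupp, hμdep, i, by
        simp only [hμ]
        have := hc i
        intro h0
        nlinarith⟩

/-- The real cone `ℝ₊M` generated by a submonoid `M ⊆ ℤ^d`: all finite nonnegative real
combinations of elements of `M`. -/
def realCone {d : ℕ} (M : AddSubmonoid (Fin d → ℤ)) : Set (Fin d → ℝ) :=
  {y | ∃ (s : Finset (Fin d → ℤ)) (c : (Fin d → ℤ) → ℝ),
    (∀ v ∈ s, v ∈ M ∧ 0 ≤ c v) ∧ y = ∑ v ∈ s, c v • (fun i => (v i : ℝ))}

lemma closureDiffM {d : ℕ} (M : AddSubmonoid (Fin d → ℤ)) (x : Fin d → ℤ)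
    (hx : x ∈ AddSubgroup.closure (M : Set (Fin d → ℤ))) :
    ∃ a ∈ M, ∃ b ∈ M, x = a - b := by
  induction hx using AddSubgroup.closure_induction with
  | mem y hy => exact ⟨y, hy, 0, zero_mem _, by simp⟩
  | zero => exact ⟨0, zero_mem _, 0, zero_mem _, by simp⟩
  | add y z _ _ hy hz =>
    obtain ⟨a, ha, b, hb, rfl⟩ := hy
    obtain ⟨a', ha', b', hb', rfl⟩ := hz
    exact ⟨a + a', add_mem ha ha', b + b', add_mem hb hb', by abel⟩
  | neg y _ hy =>
    obtain ⟨a, ha, b, hb, rfl⟩ := hy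
    exact ⟨b, hb, a, ha, by abel⟩

lemma zeroMemCone {d : ℕ} (M : AddSubmonoid (Fin d → ℤ)) : (0 : Fin d → ℝ) ∈ realCone M :=
  ⟨∅, 0, by simp, by simp⟩

lemma memCone {d : ℕ} (M : AddSubmonoid (Fin d → ℤ)) (b : Fin d → ℤ) (hb : b ∈ M) :
    (fun i => (b i : ℝ)) ∈ realCone M := by
  refine ⟨{b}, fun _ => 1, fun v hv => ?_, by simp⟩
  rw [Finset.mem_singleton] at hv
  exact ⟨hv ▸ hb, zero_le_one⟩

lemma interiorStep {d : ℕ} (M : AddSubmonoid (Fin d → ℤ)) (x b : Fin d → ℤ) (hb : b ∈ M)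
    (hxi : (fun i => (x i : ℝ)) ∈ intrinsicInterior ℝ (realCone M)) :
    ∃ ε : ℚ, 0 < ε ∧ (fun i => (x i : ℝ) - (ε : ℝ) * (b i : ℝ)) ∈ realCone M := by
  obtain ⟨y, hy, hyx⟩ := mem_intrinsicInterior.mp hxi
  set bR : Fin d → ℝ := fun i => (b i : ℝ) with hbR
  have hbS : bR ∈ affineSpan ℝ (realCone M) := subset_affineSpan ℝ _ (memCone M b hb)
  have h0S : (0 : Fin d → ℝ) ∈ affineSpan ℝ (realCone M) := subset_affineSpan ℝ _ (zeroMemCone M)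
  have hdir : bR ∈ (affineSpan ℝ (realCone M)).direction := by
    have := AffineSubspace.vsub_mem_direction hbS h0S
    simpa using this
  have hmem : ∀ t : ℝ, ((y : Fin d → ℝ) - t • bR) ∈ affineSpan ℝ (realCone M) := by
    intro t
    have h1 : (-t) • bR ∈ (affineSpan ℝ (realCone M)).direction :=
      Submodule.smul_mem _ _ hdir
    have h2 := AffineSubspace.vadd_mem_of_mem_direction h1 y.2
    have h3 : (-t) • bR +ᵥ (y : Fin d → ℝ) = (y : Fin d → ℝ) - t • bR := by
      simp [neg_smul, sub_eq_neg_add]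
    rwa [h3] at h2
  set f : ℝ → (affineSpan ℝ (realCone M) : Set (Fin d → ℝ)) :=
    fun t => ⟨(y : Fin d → ℝ) - t • bR, hmem t⟩ with hf
  have hcont : Continuous f := by
    apply Continuous.subtype_mk
    exact continuous_const.sub (continuous_id.smul continuous_const)
  have hopen : IsOpen (f ⁻¹' interior ((↑) ⁻¹' realCone M)) :=
    isOpen_interior.preimage hcont
  have h0mem : (0 : ℝ) ∈ f ⁻¹' interior ((↑) ⁻¹' realCone M) := by
    have heq : f 0 = y := Subtype.ext (by simp [hf])
    simp only [Set.mem_preimage, heq]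
    exact hy
  obtain ⟨δ, hδ, hball⟩ := Metric.isOpen_iff.mp hopen 0 h0mem
  obtain ⟨ε, hε0, hεδ⟩ := exists_rat_btwn hδ
  have hε0' : (0 : ℚ) < ε := by exact_mod_cast hε0
  have hmemball : ((ε : ℝ)) ∈ Metric.ball (0 : ℝ) δ := by
    rw [Metric.mem_ball, Real.dist_eq, sub_zero, abs_of_pos hε0]
    exact hεδ
  have h2 : f ε ∈ (↑) ⁻¹' realCone M := interior_subset (hball hmemball)
  refine ⟨ε, hε0', ?_⟩
  have h3 : ((y : Fin d → ℝ) - (ε : ℝ) • bR) ∈ realCone M := h2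
  have h4 : (fun i => (x i : ℝ) - (ε : ℝ) * (b i : ℝ)) = (y : Fin d → ℝ) - (ε : ℝ) • bR := by
    funext i
    have := congrFun hyx i
    simp [hbR, ← this]
  rwa [h4]

open Finset in
lemma depthLemma {d : ℕ} (M : AddSubmonoid (Fin d → ℤ)) (x b : Fin d → ℤ) (hb : b ∈ M)
    (hxi : (fun i => (x i : ℝ)) ∈ intrinsicInterior ℝ (realCone M)) :
    ∃ (D e : ℕ) (m : Fin d → ℤ), 0 < D ∧ 0 < e ∧ m ∈ M ∧ D • x = m + e • b := by
  classical
  obtain ⟨ε, hε, hcone⟩ := interiorStep M x b hb hxi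
  obtain ⟨s, cc, hsc, heq⟩ := hcone
  have hcoord : ∀ k, (x k : ℝ) - (ε : ℝ) * (b k : ℝ) = ∑ v ∈ s, cc v * (v k : ℝ) := by
    intro k
    have := congrFun heq k
    simpa [Finset.sum_apply] using this
  set p : ℕ := ε.num.toNat with hpdef
  set qd : ℕ := ε.den with hqddef
  have hnum : (0:ℤ) < ε.num := Rat.num_pos.mpr hε
  have hp : 0 < p := by omega
  have hqd : 0 < qd := ε.pos
  have hpz : (p : ℤ) = ε.num := Int.toNat_of_nonneg hnum.le
  have hpq : (qd : ℚ) * ε = (p : ℚ) := by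
    have h1 : ε = (ε.num : ℚ) / (ε.den : ℚ) := (Rat.num_div_den ε).symm
    have hden0 : ((ε.den : ℚ)) ≠ 0 := by exact_mod_cast ε.den_nz
    rw [h1]
    field_simp
    rw [hqddef, ← hpz]
    norm_cast
  have hpqR : (qd : ℝ) * (ε : ℝ) = (p : ℝ) := by exact_mod_cast congrArg (Rat.cast (K := ℝ)) hpq
  set z : Fin d → ℤ := qd • x - p • b with hzdef
  have hz : ∀ k, (z k : ℝ) = ∑ j : {v // v ∈ s}, ((qd : ℝ) * cc j.1) * (j.1 k : ℝ) := by
    intro k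
    have h1 : (z k : ℝ) = (qd : ℝ) * ((x k : ℝ) - (ε : ℝ) * (b k : ℝ)) := by
      simp only [hzdef, Pi.sub_apply, Pi.smul_apply, nsmul_eq_mul, Pi.mul_apply, Pi.natCast_apply]
      push_cast
      rw [mul_sub, ← hpqR]
      ring
    rw [h1, hcoord k, Finset.mul_sum]
    rw [Finset.sum_subtype (p := fun v => v ∈ s) s (fun _ => Iff.rfl)
      (fun v => (qd : ℝ) * (cc v * (v k : ℝ)))]
    exact Finset.sum_congr rfl fun j _ => by ring
  obtain ⟨Q, hQ0, hQ⟩ := nonnegRat (ι := {v // v ∈ s}) (fun j => j.1) z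
    (Fintype.card {v // v ∈ s}) (fun j => (qd : ℝ) * cc j.1)
    (Finset.card_filter_le _ _) (fun j => mul_nonneg (by positivity) (hsc j.1 j.2).2) hz
  set N : ℕ := ∏ j : {v // v ∈ s}, (Q j).den with hNdef
  have hN : 0 < N := Finset.prod_pos fun j _ => (Q j).pos
  have hint : ∀ j : {v // v ∈ s}, ∃ m : ℕ, (N : ℚ) * Q j = (m : ℚ) := by
    intro j
    obtain ⟨c, hc⟩ := Finset.dvd_prod_of_mem (fun j => (Q j).den) (Finset.mem_univ j)
    refine ⟨c * (Q j).num.toNat, ?_⟩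
    have hnum0 : (0:ℤ) ≤ (Q j).num := Rat.num_nonneg.mpr (hQ0 j)
    have h1 : Q j = ((Q j).num : ℚ) / ((Q j).den : ℚ) := (Rat.num_div_den _).symm
    have hden0 : (((Q j).den : ℚ)) ≠ 0 := by exact_mod_cast (Q j).den_nz
    have hc' : N = (Q j).den * c := hc
    have h2 : (Q j) * ((Q j).den : ℚ) = ((Q j).num : ℚ) := by
      have h := Rat.num_div_den (Q j)
      rw [div_eq_iff hden0] at h
      exact h.symm
    have h3 : ((Q j).num.toNat : ℚ) = ((Q j).num : ℚ) := by
      exact_mod_cast congrArg (fun t : ℤ => (t : ℚ)) (Int.toNat_of_nonneg hnum0)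
    rw [hc']
    push_cast [h3]
    rw [← h2]
    ring
  choose mf hmf using hint
  have hintEq : ∀ k, (N : ℤ) * z k = ∑ j : {v // v ∈ s}, (mf j : ℤ) * (j.1 k) := by
    intro k
    have h1 : ((N : ℚ)) * (z k : ℚ) = ∑ j : {v // v ∈ s}, ((N : ℚ) * Q j) * (j.1 k : ℚ) := by
      rw [hQ k, Finset.mul_sum]
      exact Finset.sum_congr rfl fun j _ => by ring
    simp_rw [hmf] at h1
    exact_mod_cast h1
  set mm : Fin d → ℤ := ∑ j : {v // v ∈ s}, (mf j) • j.1 with hmmdef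
  have hmmM : mm ∈ M := sum_mem fun j _ => AddSubmonoid.nsmul_mem M (hsc j.1 j.2).1 _
  refine ⟨N * qd, N * p, mm, by positivity, by positivity, hmmM, ?_⟩
  funext k
  have h1 := hintEq k
  have h2 : mm k = ∑ j : {v // v ∈ s}, (mf j : ℤ) * (j.1 k) := by
    simp [hmmdef, Finset.sum_apply]
  have h3 : z k = (qd : ℤ) * x k - (p : ℤ) * b k := by
    simp only [hzdef, Pi.sub_apply, Pi.smul_apply, nsmul_eq_mul, Pi.mul_apply, Pi.natCast_apply]
  have goal : ((N * qd : ℕ) : ℤ) * x k = mm k + ((N * p : ℕ) : ℤ) * b k := by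
    rw [h2, ← h1, h3]
    push_cast
    ring
  simpa [Pi.add_apply, Pi.smul_apply, nsmul_eq_mul] using goal

lemma downward {d : ℕ} (M : AddSubmonoid (Fin d → ℤ))
    (hsn : ∀ x ∈ AddSubgroup.closure (M : Set (Fin d → ℤ)), 2 • x ∈ M → 3 • x ∈ M → x ∈ M)
    (x : Fin d → ℤ) (hx : x ∈ AddSubgroup.closure (M : Set (Fin d → ℤ))) :
    ∀ N : ℕ, 0 < N → (∀ n : ℕ, N ≤ n → n • x ∈ M) → x ∈ M := by
  intro N
  induction N using Nat.strong_induction_on with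
  | _ N ih =>
    intro hN h
    rcases Nat.lt_or_ge N 2 with h2 | h2
    · have h1 := h 1 (by omega)
      simpa using h1
    · refine ih ((N + 1) / 2) (by omega) (by omega) ?_
      intro n hn
      have hmem : n • x ∈ AddSubgroup.closure (M : Set (Fin d → ℤ)) :=
        nsmul_mem hx n
      refine hsn (n • x) hmem ?_ ?_
      · rw [smul_smul]
        exact h (2 * n) (by omega)
      · rw [smul_smul]
        exact h (3 * n) (by omega)

/-- For a seminormal affine monoid `M ⊆ ℤ^d`, the lattice points of `ℤM` lying in the
relative interior of the cone `ℝ₊M` belong to `M`. -/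
theorem stmt_7 (d : ℕ) (M : AddSubmonoid (Fin d → ℤ)) (hfg : M.FG)
    (hsn : ∀ x ∈ AddSubgroup.closure (M : Set (Fin d → ℤ)),
      2 • x ∈ M → 3 • x ∈ M → x ∈ M) :
    ∀ x ∈ AddSubgroup.closure (M : Set (Fin d → ℤ)),
      (fun i => (x i : ℝ)) ∈ intrinsicInterior ℝ (realCone M) → x ∈ M := by
  intro x hx hxi
  obtain ⟨a, ha, b, hb, hab⟩ := closureDiffM M x hx
  obtain ⟨D, e, m, hD, he, hm, hDx⟩ := depthLemma M x b hb hxi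
  have hbig : ∀ n : ℕ, D * D ≤ n → n • x ∈ M := by
    intro n hn
    set k := n / D with hk
    set r := n % D with hr
    have hkD : n = k * D + r := by
      rw [hk, hr, Nat.mul_comm (n / D) D]
      exact (Nat.div_add_mod n D).symm
    have hrD : r < D := Nat.mod_lt _ hD
    have hkbig : D ≤ k := (Nat.le_div_iff_mul_le hD).mpr hn
    have hker : r ≤ k * e := le_trans hrD.le (le_trans hkbig (Nat.le_mul_of_pos_right _ he))
    have key : n • x = k • m + r • a + (k * e - r) • b := by
      funext j
      have h1 := congrFun hDx j
      have h2 := congrFun hab j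
      simp only [Pi.add_apply, Pi.smul_apply, Pi.sub_apply, nsmul_eq_mul, Pi.mul_apply,
        Pi.natCast_apply] at h1 h2 ⊢
      have hcast : ((k * e - r : ℕ) : ℤ) = (k : ℤ) * (e : ℤ) - (r : ℤ) := by
        rw [Nat.cast_sub hker]
        push_cast
        ring
      rw [hcast]
      have hnz : (n : ℤ) = (k : ℤ) * (D : ℤ) + (r : ℤ) := by exact_mod_cast congrArg (Nat.cast (R := ℤ)) hkD
      linear_combination (k : ℤ) * h1 + (r : ℤ) * h2 + (x j) * hnz
    rw [key]
    exact add_mem (add_mem (AddSubmonoid.nsmul_mem M hm k) (AddSubmonoid.nsmul_mem M ha r))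
      (AddSubmonoid.nsmul_mem M hb _)
  exact downward M hsn x hx (D * D) (by positivity) hbig
end

section
/- Let R' ↪ R be an algebra retract of commutative rings containing a field of characteristic p > 0. If R is F-pure, then R' is F-pure. -/
open TensorProduct in
/-- A ring map `f : R →+* S` is pure if for every `R`-module `M` (with `S` viewed as an
`R`-algebra via `f`) the natural map `M → S ⊗[R] M`, `m ↦ 1 ⊗ m`, is injective. -/
def IsPureRingHom {R S : Type} [CommRing R] [CommRing S] (f : R →+* S) : Prop :=
  ∀ (M : Type) (_ : AddCommGroup M) (_ : Module R M),
    letI := f.toAlgebra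
    Function.Injective (fun m : M => (1 : S) ⊗ₜ[R] m)

open TensorProduct in
/-- If `R' ↪ R` is an algebra retract of commutative rings containing a field of
characteristic `p > 0` and `R` is `F`-pure, then `R'` is `F`-pure. -/
theorem stmt_11 (p : ℕ) [Fact p.Prime] (k R R' : Type) [Field k] [CharP k p]
    [CommRing R] [CommRing R'] [Algebra k R] [Algebra k R'] [CharP R p] [CharP R' p]
    (f : R' →+* R) (r : R →+* R') (hretract : r.comp f = RingHom.id R')
    (hpure : IsPureRingHom (frobenius R p)) :
    IsPureRingHom (frobenius R' p) := by
  intro M instAdd instMod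
  letI instModR : Module R M := Module.compHom M r
  have key := hpure M instAdd instModR
  letI algR' : Algebra R' R' := (frobenius R' p).toAlgebra
  letI algR : Algebra R R := (frobenius R p).toAlgebra
  letI modR' : Module R' R' := algR'.toModule
  letI modR : Module R R := algR.toModule
  letI smulR' : SMul R' R' := algR'.toSMul
  letI smulR : SMul R R := algR.toSMul
  -- additive map ψ : R' ⊗[R'] M →+ R ⊗[R] M, b ⊗ m ↦ f b ⊗ m
  have hbal : ∀ (c b : R') (m : M),
      (f (c • b) ⊗ₜ[R] m : R ⊗[R] M) = f b ⊗ₜ[R] (c • m) := by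
    intro c b m
    have h1 : c • b = frobenius R' p c * b := rfl
    have h2 : f (frobenius R' p c * b) = (f c) • (f b) := by
      show f (frobenius R' p c * b) = frobenius R p (f c) * f b
      rw [map_mul, f.map_frobenius p]
    have h3 : (c • m : M) = (f c) • m := by
      show c • m = r (f c) • m
      rw [show r (f c) = c from RingHom.congr_fun hretract c]
    rw [h1, h2, h3]
    exact Quotient.sound' <| AddConGen.Rel.of _ _ <| TensorProduct.Eqv.of_smul _ _ _
  let ψ : R' ⊗[R'] M →+ R ⊗[R] M :=
    TensorProduct.liftAddHom
      { toFun := fun b =>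
          { toFun := fun m => f b ⊗ₜ[R] m
            map_zero' := TensorProduct.tmul_zero _ _
            map_add' := fun x y => TensorProduct.tmul_add _ x y }
        map_zero' := by ext m; simp
        map_add' := fun x y => by ext m; simp [TensorProduct.add_tmul] }
      (fun c b m => hbal c b m)
  intro m m' h
  apply key
  have := congrArg ψ h
  simpa [ψ, TensorProduct.liftAddHom_tmul, map_one] using this
end

section
/- Let M be a seminormal positive affine monoid in ℤ^d, p a prime, and suppose that for every face F of the cone ℝ₊M, the abelian group (ℤM ∩ ℝF)/ℤ(M ∩ F) has no p-torsion. Then M ∩ pℤM = pM. -/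
/-- The real cone generated by a submonoid `M ⊆ ℤ^d`. -/
def realConeOf {d : ℕ} (M : AddSubmonoid (Fin d → ℤ)) : Set (Fin d → ℝ) :=
  {y | ∃ (s : Finset (Fin d → ℤ)) (c : (Fin d → ℤ) → ℝ),
    (∀ v ∈ s, v ∈ M ∧ 0 ≤ c v) ∧ y = ∑ v ∈ s, c v • (fun i => (v i : ℝ))}

open Matrix Finset

theorem my_farkas {K : Type*} [Field K] [LinearOrder K] [IsStrictOrderedRing K] {d : ℕ} {ι : Type*} [DecidableEq ι]
    (s : Finset ι) (v : ι → Fin d → K) (g : Fin d → K) :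
    (∃ c : ι → K, (∀ i ∈ s, 0 ≤ c i) ∧ g = ∑ i ∈ s, c i • v i) ∨
    (∃ l : Fin d → K, (∀ i ∈ s, 0 ≤ l ⬝ᵥ v i) ∧ l ⬝ᵥ g < 0) := by
  classical
  induction s using Finset.induction_on generalizing v g with
  | empty =>
    by_cases hg : g = 0
    · exact Or.inl ⟨0, by simp, by simp [hg]⟩
    · refine Or.inr ⟨-g, by simp, ?_⟩
      have h0 : 0 ≤ g ⬝ᵥ g := Finset.sum_nonneg fun i _ => mul_self_nonneg (g i)
      have : 0 < g ⬝ᵥ g := by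
        rcases lt_or_eq_of_le h0 with h | h
        · exact h
        · exact absurd (dotProduct_self_eq_zero.mp h.symm) hg
      simpa [neg_dotProduct] using neg_lt_zero.mpr this
  | @insert a s ha ih =>
    rcases ih v g with ⟨c, hc, hrep⟩ | ⟨l, hl, hlg⟩
    · refine Or.inl ⟨Function.update c a 0, ?_, ?_⟩
      · intro i hi
        by_cases h : i = a
        · subst h; simp
        · rw [Function.update_of_ne h]
          exact hc i ((Finset.mem_insert.mp hi).resolve_left h)
      · rw [Finset.sum_insert ha, Function.update_self, zero_smul, zero_add, hrep]
        exact Finset.sum_congr rfl fun i hi =>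
          by rw [Function.update_of_ne (fun h => ha (by rwa [h] at hi))]
    · by_cases hla : 0 ≤ l ⬝ᵥ v a
      · refine Or.inr ⟨l, ?_, hlg⟩
        intro i hi
        rcases Finset.mem_insert.mp hi with h | h
        · rw [h]; exact hla
        · exact hl i h
      · push_neg at hla
        set w := v a with hw
        set π : (Fin d → K) → (Fin d → K) := fun u => u - ((l ⬝ᵥ u) / (l ⬝ᵥ w)) • w with hπ
        have hne : l ⬝ᵥ w ≠ 0 := ne_of_lt hla
        have key : ∀ u : Fin d → K, π u + ((l ⬝ᵥ u) / (l ⬝ᵥ w)) • w = u := by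
          intro u; simp [hπ]
        have hπw : π w = 0 := by
          simp only [hπ, div_self hne, one_smul, sub_self]
        rcases ih (fun i => π (v i)) (π g) with ⟨c, hc, hrep⟩ | ⟨m, hm, hmg⟩
        · set γ : K := (l ⬝ᵥ g) / (l ⬝ᵥ w) with hγ
          set σ : K := ∑ i ∈ s, c i * ((l ⬝ᵥ v i) / (l ⬝ᵥ w)) with hσ
          set μ : K := γ - σ with hμ
          have hμpos : 0 ≤ μ := by
            have h1 : 0 < γ := div_pos_of_neg_of_neg hlg hla
            have h2 : ∀ i ∈ s, c i * ((l ⬝ᵥ v i) / (l ⬝ᵥ w)) ≤ 0 := fun i hi =>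
              mul_nonpos_of_nonneg_of_nonpos (hc i hi)
                (div_nonpos_of_nonneg_of_nonpos (hl i hi) hla.le)
            have h3 : σ ≤ 0 := hσ ▸ Finset.sum_nonpos h2
            simp only [hμ]; linarith
          refine Or.inl ⟨Function.update c a μ, ?_, ?_⟩
          · intro i hi
            by_cases h : i = a
            · rw [h, Function.update_self]; exact hμpos
            · rw [Function.update_of_ne h]
              exact hc i ((Finset.mem_insert.mp hi).resolve_left h)
          · have hsum : ∑ i ∈ s, Function.update c a μ i • v i = ∑ i ∈ s, c i • v i :=
              Finset.sum_congr rfl fun i hi =>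
                by rw [Function.update_of_ne (fun h => ha (by rwa [h] at hi))]
            rw [Finset.sum_insert ha, Function.update_self, hsum]
            have expand : ∑ i ∈ s, c i • v i = π g + σ • w := by
              rw [hσ, Finset.sum_smul, hrep, ← Finset.sum_add_distrib]
              refine Finset.sum_congr rfl fun i hi => ?_
              rw [← smul_smul, ← smul_add, key (v i)]
            rw [expand]
            have hkg := key g
            rw [← hγ] at hkg
            conv_lhs => rw [← hkg]
            rw [hμ, ← hw, sub_smul]
            abel
        · have dot_eq : ∀ u : Fin d → K,
              (m - ((m ⬝ᵥ w) / (l ⬝ᵥ w)) • l) ⬝ᵥ u = m ⬝ᵥ π u := by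
            intro u
            simp only [hπ, sub_dotProduct, smul_dotProduct,
              dotProduct_sub, dotProduct_smul, smul_eq_mul]
            field_simp
          refine Or.inr ⟨m - ((m ⬝ᵥ w) / (l ⬝ᵥ w)) • l, ?_, by rw [dot_eq]; exact hmg⟩
          intro i hi
          rcases Finset.mem_insert.mp hi with h | h
          · rw [h, dot_eq, ← hw, hπw, dotProduct_zero]
          · rw [dot_eq]; exact hm i h
open Finset

lemma rep_nsmul {A : Type*} [AddCommMonoid A] [DecidableEq A] (S : Finset A) (x : A) :
    x ∈ AddSubmonoid.closure (S : Set A) ↔ ∃ c : A → ℕ, x = ∑ v ∈ S, c v • v := by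
  constructor
  · intro hx
    induction hx using AddSubmonoid.closure_induction with
    | mem y hy =>
      refine ⟨fun v => if v = y then 1 else 0, ?_⟩
      simp only [ite_smul, one_smul, zero_smul]
      rw [Finset.sum_ite_eq' S y (fun v => v), if_pos (Finset.mem_coe.mp hy)]
    | zero => exact ⟨0, by simp⟩
    | add y z _ _ hy hz =>
      obtain ⟨c1, h1⟩ := hy
      obtain ⟨c2, h2⟩ := hz
      exact ⟨c1 + c2, by simp [h1, h2, add_smul, Finset.sum_add_distrib]⟩
  · rintro ⟨c, rfl⟩
    exact AddSubmonoid.sum_mem _ fun v hv =>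
      AddSubmonoid.nsmul_mem _ (AddSubmonoid.subset_closure hv) _

lemma rep_zsmul {A : Type*} [AddCommGroup A] [DecidableEq A] (S : Finset A) (x : A)
    (hx : x ∈ AddSubgroup.closure (S : Set A)) : ∃ c : A → ℤ, x = ∑ v ∈ S, c v • v := by
  induction hx using AddSubgroup.closure_induction with
  | mem y hy =>
    refine ⟨fun v => if v = y then 1 else 0, ?_⟩
    simp only [ite_smul, one_smul, zero_smul]
    rw [Finset.sum_ite_eq' S y (fun v => v), if_pos (Finset.mem_coe.mp hy)]
  | zero => exact ⟨0, by simp⟩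
  | add y z _ _ hy hz =>
    obtain ⟨c1, h1⟩ := hy
    obtain ⟨c2, h2⟩ := hz
    exact ⟨c1 + c2, by simp [h1, h2, add_smul, Finset.sum_add_distrib]⟩
  | neg y _ hy =>
    obtain ⟨c, h⟩ := hy
    exact ⟨-c, by simp [h, neg_smul, Finset.sum_neg_distrib]⟩
open Finset Matrix

/-- Coordinatewise cast `ℤ^d → ℝ^d` as an additive hom. -/
def castR {d : ℕ} : (Fin d → ℤ) →+ (Fin d → ℝ) where
  toFun v := fun i => (v i : ℝ)
  map_zero' := by funext i; simp
  map_add' u v := by funext i; simp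

/-- Coordinatewise cast `ℤ^d → ℚ^d` as an additive hom. -/
def castQ {d : ℕ} : (Fin d → ℤ) →+ (Fin d → ℚ) where
  toFun v := fun i => (v i : ℚ)
  map_zero' := by funext i; simp
  map_add' u v := by funext i; simp

lemma castQ_inj {d : ℕ} {u v : Fin d → ℤ} (h : castQ u = castQ v) : u = v := by
  funext i
  have h2 := congrFun h i
  have : ((u i : ℚ)) = (v i : ℚ) := h2
  exact_mod_cast this

lemma castR_nsmul {d : ℕ} (n : ℕ) (v : Fin d → ℤ) : castR (n • v) = (n : ℝ) • castR v := by
  rw [map_nsmul, Nat.cast_smul_eq_nsmul]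

lemma castQ_nsmul {d : ℕ} (n : ℕ) (v : Fin d → ℤ) : castQ (n • v) = (n : ℚ) • castQ v := by
  rw [map_nsmul, Nat.cast_smul_eq_nsmul]

lemma castQ_zsmul {d : ℕ} (n : ℤ) (v : Fin d → ℤ) : castQ (n • v) = (n : ℚ) • castQ v := by
  rw [map_zsmul, Int.cast_smul_eq_zsmul]

/-- Linear functional on `ℝ^d` from a rational vector. -/
noncomputable def ellOf {d : ℕ} (l : Fin d → ℚ) : (Fin d → ℝ) →ₗ[ℝ] ℝ :=
  ∑ i, (l i : ℝ) • LinearMap.proj i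

lemma ellOf_cast {d : ℕ} (l : Fin d → ℚ) (v : Fin d → ℤ) :
    ellOf l (castR v) = ((l ⬝ᵥ castQ v : ℚ) : ℝ) := by
  simp only [ellOf, LinearMap.sum_apply, LinearMap.smul_apply, LinearMap.proj_apply,
    dotProduct]
  push_cast
  rfl

/-- Clearing denominators. -/
lemma clear_den (q : ℚ) (hq : 0 ≤ q) (k : ℕ) :
    ((q.den * k : ℕ) : ℚ) * q = ((k * q.num.toNat : ℕ) : ℚ) := by
  have hn : ((q.num.toNat : ℕ) : ℚ) = ((q.num : ℤ) : ℚ) := by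
    exact_mod_cast congrArg (fun z : ℤ => (z : ℚ)) (Int.toNat_of_nonneg (Rat.num_nonneg.mpr hq))
  push_cast
  rw [hn, mul_comm (q.den : ℚ) (k : ℚ), mul_assoc, mul_comm (q.den : ℚ) q, Rat.mul_den_eq_num]

set_option maxHeartbeats 2000000 in
/-- Let `M ⊆ ℤ^d` be a seminormal positive affine monoid and `p` a prime such that for
every face `F` of `ℝ₊M` (cut out by a supporting linear functional), the group
`(ℤM ∩ ℝF)/ℤ(M ∩ F)` has no `p`-torsion.  Then `M ∩ pℤM = pM`. -/
theorem stmt_13 (d : ℕ) (p : ℕ) (hp : p.Prime) (M : AddSubmonoid (Fin d → ℤ))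
    (hfg : M.FG)
    (hpos : ∀ z ∈ M, -z ∈ M → z = 0)
    (hsn : ∀ x ∈ AddSubgroup.closure (M : Set (Fin d → ℤ)),
      2 • x ∈ M → 3 • x ∈ M → x ∈ M)
    (htor : ∀ ℓ : (Fin d → ℝ) →ₗ[ℝ] ℝ, (∀ y ∈ realConeOf M, 0 ≤ ℓ y) →
      ∀ g ∈ AddSubgroup.closure (M : Set (Fin d → ℤ)),
        (fun i => (g i : ℝ)) ∈
          Submodule.span ℝ {y ∈ realConeOf M | ℓ y = 0} →
        p • g ∈ AddSubgroup.closure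
          {x : Fin d → ℤ | x ∈ M ∧ (fun i => (x i : ℝ)) ∈ realConeOf M ∧
            ℓ (fun i => (x i : ℝ)) = 0} →
        g ∈ AddSubgroup.closure
          {x : Fin d → ℤ | x ∈ M ∧ (fun i => (x i : ℝ)) ∈ realConeOf M ∧
            ℓ (fun i => (x i : ℝ)) = 0}) :
    ∀ x : Fin d → ℤ,
      (x ∈ M ∧ ∃ g ∈ AddSubgroup.closure (M : Set (Fin d → ℤ)), x = p • g) ↔
      (∃ m ∈ M, x = p • m) := by
  classical
  obtain ⟨S, hS⟩ := hfg
  intro x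
  constructor
  case mpr =>
    rintro ⟨m, hm, rfl⟩
    exact ⟨AddSubmonoid.nsmul_mem M hm p, m, AddSubgroup.subset_closure hm, rfl⟩
  rintro ⟨hxM, g, hg, hxpg⟩
  refine ⟨g, ?_, hxpg⟩
  -- it suffices to show `g ∈ M`
  have hp0 : 0 < p := hp.pos
  have hSM : ∀ u ∈ S, u ∈ M := fun u hu => hS ▸ AddSubmonoid.subset_closure hu
  have memM_iff : ∀ v : Fin d → ℤ, v ∈ M ↔ ∃ c : (Fin d → ℤ) → ℕ, v = ∑ u ∈ S, c u • u := by
    intro v; rw [← hS]; exact rep_nsmul S v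
  have castR_comb : ∀ (s : Finset (Fin d → ℤ)) (c : (Fin d → ℤ) → ℕ),
      castR (∑ u ∈ s, c u • u) = ∑ u ∈ s, (c u : ℝ) • castR u := by
    intro s c; rw [map_sum]; exact Finset.sum_congr rfl fun u _ => castR_nsmul _ _
  have castQ_comb : ∀ (s : Finset (Fin d → ℤ)) (c : (Fin d → ℤ) → ℕ),
      castQ (∑ u ∈ s, c u • u) = ∑ u ∈ s, (c u : ℚ) • castQ u := by
    intro s c; rw [map_sum]; exact Finset.sum_congr rfl fun u _ => castQ_nsmul _ _
  have castQ_combz : ∀ (s : Finset (Fin d → ℤ)) (c : (Fin d → ℤ) → ℤ),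
      castQ (∑ u ∈ s, c u • u) = ∑ u ∈ s, (c u : ℚ) • castQ u := by
    intro s c; rw [map_sum]; exact Finset.sum_congr rfl fun u _ => castQ_zsmul _ _
  have cone_mem : ∀ v ∈ M, castR v ∈ realConeOf M := by
    intro v hv
    refine ⟨{v}, fun _ => 1, ?_, ?_⟩
    · intro u hu
      rw [Finset.mem_singleton] at hu
      subst hu; exact ⟨hv, zero_le_one⟩
    · rw [Finset.sum_singleton, one_smul]; rfl
  have ell_nonneg_gen : ∀ (ℓ : (Fin d → ℝ) →ₗ[ℝ] ℝ), (∀ u ∈ S, 0 ≤ ℓ (castR u)) →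
      ∀ v ∈ M, 0 ≤ ℓ (castR v) := by
    intro ℓ h v hv
    obtain ⟨c, rfl⟩ := (memM_iff v).1 hv
    rw [castR_comb, map_sum]
    refine Finset.sum_nonneg fun u hu => ?_
    rw [LinearMap.map_smul, smul_eq_mul]
    exact mul_nonneg (by positivity) (h u hu)
  have ell_nonneg_cone : ∀ (ℓ : (Fin d → ℝ) →ₗ[ℝ] ℝ), (∀ u ∈ S, 0 ≤ ℓ (castR u)) →
      ∀ y ∈ realConeOf M, 0 ≤ ℓ y := by
    intro ℓ h y hy
    obtain ⟨s, c, hsc, rfl⟩ := hy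
    rw [map_sum]
    refine Finset.sum_nonneg fun v hv => ?_
    rw [LinearMap.map_smul, smul_eq_mul]
    exact mul_nonneg (hsc v hv).2 (ell_nonneg_gen ℓ h v (hsc v hv).1)
  -- the set of supporting functionals vanishing on `g`
  set L : Set ((Fin d → ℝ) →ₗ[ℝ] ℝ) :=
    {ℓ | (∀ y ∈ realConeOf M, 0 ≤ ℓ y) ∧ ℓ (castR g) = 0} with hLdef
  set T : Finset (Fin d → ℤ) := S.filter (fun v => ∀ ℓ ∈ L, ℓ (castR v) = 0) with hTdef
  have hTS : T ⊆ S := Finset.filter_subset _ _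
  obtain ⟨a, hax⟩ := (memM_iff x).1 hxM
  have hcastRx : castR x = (p : ℝ) • castR g := by rw [hxpg]; exact castR_nsmul p g
  have hcastQx : castQ x = (p : ℚ) • castQ g := by rw [hxpg]; exact castQ_nsmul p g
  have hgcone : castR g ∈ realConeOf M := by
    refine ⟨S, fun u => (a u : ℝ) / p, fun u hu => ⟨hSM u hu, by positivity⟩, ?_⟩
    have h1 : castR x = ∑ u ∈ S, (a u : ℝ) • castR u := by rw [hax]; exact castR_comb S a
    have h2 : (p : ℝ) ≠ 0 := by positivity
    have h3 : castR g = (p : ℝ)⁻¹ • castR x := by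
      rw [hcastRx, smul_smul, inv_mul_cancel₀ h2, one_smul]
    rw [h3, h1, Finset.smul_sum]
    refine Finset.sum_congr rfl fun u hu => ?_
    rw [smul_smul]
    simp only [div_eq_inv_mul]
    rfl
  -- a functional whose zero set on `S` is exactly `T`
  have hex : ∀ v : Fin d → ℤ, v ∈ S → v ∉ T → ∃ ℓ ∈ L, ℓ (castR v) ≠ 0 := by
    intro v hvS hvT
    by_contra hcon
    push_neg at hcon
    exact hvT (by rw [hTdef, Finset.mem_filter]; exact ⟨hvS, hcon⟩)
  set F : (Fin d → ℤ) → ((Fin d → ℝ) →ₗ[ℝ] ℝ) :=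
    fun v => if h : ∃ ℓ ∈ L, ℓ (castR v) ≠ 0 then h.choose else 0 with hFdef
  have hFeq : ∀ v, F v = if h : ∃ ℓ ∈ L, ℓ (castR v) ≠ 0 then h.choose else 0 :=
    fun v => rfl
  have hF_L : ∀ v, F v ∈ L := by
    intro v
    rw [hFeq]
    by_cases h : ∃ ℓ ∈ L, ℓ (castR v) ≠ 0
    · rw [dif_pos h]; exact h.choose_spec.1
    · rw [dif_neg h]
      exact ⟨fun y _ => le_refl 0, rfl⟩
  have hF_pos : ∀ v, v ∈ S → v ∉ T → 0 < F v (castR v) := by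
    intro v hvS hvT
    have h := hex v hvS hvT
    have hne : F v (castR v) ≠ 0 := by
      rw [hFeq, dif_pos h]; exact h.choose_spec.2
    have hge : 0 ≤ F v (castR v) := (hF_L v).1 _ (cone_mem v (hSM v hvS))
    exact lt_of_le_of_ne hge (Ne.symm hne)
  set ℓs : (Fin d → ℝ) →ₗ[ℝ] ℝ := ∑ v ∈ S \ T, F v with hℓsdef
  have hℓs_apply : ∀ y, ℓs y = ∑ v ∈ S \ T, F v y := by
    intro y; rw [hℓsdef]; exact LinearMap.sum_apply _ _ _
  have hℓs_cone : ∀ y ∈ realConeOf M, 0 ≤ ℓs y := by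
    intro y hy
    rw [hℓs_apply]
    exact Finset.sum_nonneg fun v _ => (hF_L v).1 y hy
  have hℓs_g : ℓs (castR g) = 0 := by
    rw [hℓs_apply]
    exact Finset.sum_eq_zero fun v _ => (hF_L v).2
  have hℓs_L : ℓs ∈ L := ⟨hℓs_cone, hℓs_g⟩
  have hℓsT : ∀ v ∈ T, ℓs (castR v) = 0 := by
    intro v hv
    rw [hTdef, Finset.mem_filter] at hv
    exact hv.2 ℓs hℓs_L
  have hℓs_posS : ∀ v, v ∈ S → v ∉ T → 0 < ℓs (castR v) := by
    intro v hvS hvT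
    rw [hℓs_apply]
    have hvmem : v ∈ S \ T := Finset.mem_sdiff.mpr ⟨hvS, hvT⟩
    refine lt_of_lt_of_le (hF_pos v hvS hvT) ?_
    exact Finset.single_le_sum
      (fun u _ => (hF_L u).1 _ (cone_mem v (hSM v hvS))) hvmem
  -- supports are contained in `T`
  have hsupp : ∀ (b : (Fin d → ℤ) → ℕ), ℓs (castR (∑ u ∈ S, b u • u)) = 0 →
      ∀ u ∈ S, u ∉ T → b u = 0 := by
    intro b hb u huS huT
    rw [castR_comb, map_sum] at hb
    have hnn : ∀ v ∈ S, 0 ≤ ℓs ((b v : ℝ) • castR v) := by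
      intro v hv
      rw [LinearMap.map_smul, smul_eq_mul]
      exact mul_nonneg (by positivity)
        (ell_nonneg_gen ℓs (fun u' hu' => hℓs_cone _ (cone_mem u' (hSM u' hu'))) v (hSM v hv))
    have hzero := (Finset.sum_eq_zero_iff_of_nonneg hnn).1 hb u huS
    rw [LinearMap.map_smul, smul_eq_mul] at hzero
    have hpos' := hℓs_posS u huS huT
    by_contra hbne
    have hb0 : (0:ℝ) < (b u : ℝ) := by
      have := Nat.pos_of_ne_zero hbne
      exact_mod_cast this
    nlinarith
  have haT : ∀ u ∈ S, u ∉ T → a u = 0 := by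
    refine hsupp a ?_
    rw [← hax, hcastRx, LinearMap.map_smul, smul_eq_mul, hℓs_g, mul_zero]
  -- apply the torsion hypothesis
  have hgx0 : ℓs (castR x) = 0 := by
    rw [hcastRx, LinearMap.map_smul, smul_eq_mul, hℓs_g, mul_zero]
  have hg_face : g ∈ AddSubgroup.closure
      {y : Fin d → ℤ | y ∈ M ∧ (fun i => (y i : ℝ)) ∈ realConeOf M ∧
        ℓs (fun i => (y i : ℝ)) = 0} := by
    refine htor ℓs hℓs_cone g hg ?_ ?_
    · exact Submodule.subset_span ⟨hgcone, hℓs_g⟩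
    · rw [← hxpg]
      exact AddSubgroup.subset_closure ⟨hxM, cone_mem x hxM, hgx0⟩
  have hTsub : g ∈ AddSubgroup.closure ((T : Finset (Fin d → ℤ)) : Set (Fin d → ℤ)) := by
    refine (AddSubgroup.closure_le _).2 ?_ hg_face
    rintro y ⟨hyM, -, hy0⟩
    obtain ⟨b, rfl⟩ := (memM_iff y).1 hyM
    have hbT := hsupp b hy0
    have heq : ∑ u ∈ S, b u • u = ∑ u ∈ T, b u • u := by
      refine (Finset.sum_subset hTS ?_).symm
      intro u huS huT
      rw [hbT u huS huT, zero_smul]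
    rw [heq]
    exact AddSubgroup.sum_mem _ fun u hu =>
      AddSubgroup.nsmul_mem _ (AddSubgroup.subset_closure hu) _
  obtain ⟨z, hz⟩ := rep_zsmul T g hTsub
  -- dispose of the trivial case `T = ∅`
  rcases T.eq_empty_or_nonempty with hTe | hTne
  · rw [hTe, Finset.sum_empty] at hz
    rw [hz]; exact M.zero_mem
  -- rational nonnegative representation of `g` over `T`
  have hp2 : (p : ℚ) ≠ 0 := by positivity
  have hgQT : castQ g = ∑ u ∈ T, ((a u : ℚ) / p) • castQ u := by
    have h1 : castQ x = ∑ u ∈ S, (a u : ℚ) • castQ u := by rw [hax]; exact castQ_comb S a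
    have h2 : ∑ u ∈ S, (a u : ℚ) • castQ u = ∑ u ∈ T, (a u : ℚ) • castQ u := by
      refine (Finset.sum_subset hTS ?_).symm
      intro u huS huT
      rw [haT u huS huT]; simp
    have h3 : castQ g = (p : ℚ)⁻¹ • castQ x := by
      rw [hcastQx, smul_smul, inv_mul_cancel₀ hp2, one_smul]
    rw [h3, h1, h2, Finset.smul_sum]
    refine Finset.sum_congr rfl fun u hu => ?_
    rw [smul_smul]
    simp only [div_eq_inv_mul]
  have hCw : ∀ w ∈ T, ∃ c : (Fin d → ℤ) → ℚ, (∀ u ∈ T, 0 ≤ c u) ∧ 0 < c w ∧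
      castQ g = ∑ u ∈ T, c u • castQ u := by
    intro w hw
    set vOf : ((Fin d → ℤ) ⊕ Fin 2) → (Fin d → ℚ) :=
      Sum.elim (fun u => castQ u) (fun j => if j = 0 then castQ g else -castQ g) with hvOf
    set emb : (Fin d → ℤ) ↪ ((Fin d → ℤ) ⊕ Fin 2) := ⟨Sum.inl, Sum.inl_injective⟩ with hemb
    set sF : Finset ((Fin d → ℤ) ⊕ Fin 2) :=
      insert (Sum.inr 0) (insert (Sum.inr 1) (T.map emb)) with hsF
    have h0mem : (Sum.inr 0 : (Fin d → ℤ) ⊕ Fin 2) ∈ sF := Finset.mem_insert_self _ _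
    have h1mem : (Sum.inr 1 : (Fin d → ℤ) ⊕ Fin 2) ∈ sF :=
      Finset.mem_insert_of_mem (Finset.mem_insert_self _ _)
    have hinlmem : ∀ u ∈ T, (Sum.inl u : (Fin d → ℤ) ⊕ Fin 2) ∈ sF := fun u hu =>
      Finset.mem_insert_of_mem (Finset.mem_insert_of_mem (Finset.mem_map_of_mem emb hu))
    rcases my_farkas sF vOf (-(castQ w)) with ⟨c, hc, hrep⟩ | ⟨l, hl, hlg⟩
    · -- a nonnegative combination exists
      have h01 : (Sum.inr 0 : (Fin d → ℤ) ⊕ Fin 2) ∉ insert (Sum.inr 1) (T.map emb) := by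
        simp [Fin.ext_iff]
      have h1m : (Sum.inr 1 : (Fin d → ℤ) ⊕ Fin 2) ∉ T.map emb := by simp [hemb]
      have hsum : ∑ i ∈ sF, c i • vOf i
          = c (Sum.inr 0) • castQ g + (c (Sum.inr 1) • (-castQ g)
            + ∑ u ∈ T, c (Sum.inl u) • castQ u) := by
        rw [hsF, Finset.sum_insert h01, Finset.sum_insert h1m, Finset.sum_map]
        rfl
      rw [hsum] at hrep
      set α : ℚ := c (Sum.inr 0) with hα
      set β : ℚ := c (Sum.inr 1) with hβ
      have hα0 : 0 ≤ α := hc _ h0mem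
      have hβ0 : 0 ≤ β := hc _ h1mem
      have hcT : ∀ u ∈ T, 0 ≤ c (Sum.inl u) := fun u hu => hc _ (hinlmem u hu)
      set Sig : Fin d → ℚ := ∑ u ∈ T, c (Sum.inl u) • castQ u with hSig
      have hrep' : -castQ w = α • castQ g + (-(β • castQ g) + Sig) := by
        rw [hrep]; rw [smul_neg]
      by_cases hαβ : α < β
      · -- `g` has a representation with positive coefficient at `w`
        set δ : ℚ := β - α with hδ
        have hδpos : 0 < δ := by rw [hδ]; linarith
        have key : δ • castQ g = castQ w + Sig := by
          have h4 : δ • castQ g - (castQ w + Sig)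
              = (-castQ w) - (α • castQ g + ((-(β • castQ g)) + Sig)) := by
            rw [hδ, sub_smul]; abel
          have h5 : (-castQ w) - (α • castQ g + ((-(β • castQ g)) + Sig)) = 0 :=
            sub_eq_zero.mpr hrep'
          rw [← sub_eq_zero, h4, h5]
        refine ⟨fun u => ((if u = w then (1:ℚ) else 0) + c (Sum.inl u)) / δ, ?_, ?_, ?_⟩
        · intro u hu
          show 0 ≤ ((if u = w then (1:ℚ) else 0) + c (Sum.inl u)) / δ
          refine div_nonneg (add_nonneg ?_ (hcT u hu)) hδpos.le
          split <;> norm_num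
        · show 0 < ((if w = w then (1:ℚ) else 0) + c (Sum.inl w)) / δ
          rw [if_pos rfl]
          have := hcT w hw
          positivity
        · have hδne : δ ≠ 0 := ne_of_gt hδpos
          have hgoal : ∑ u ∈ T, (((if u = w then (1:ℚ) else 0) + c (Sum.inl u)) / δ) • castQ u
              = δ⁻¹ • (castQ w + Sig) := by
            have h10 : ∀ u ∈ T, (((if u = w then (1:ℚ) else 0) + c (Sum.inl u)) / δ) • castQ u
                = δ⁻¹ • (((if u = w then (1:ℚ) else 0) + c (Sum.inl u)) • castQ u) := by
              intro u _; rw [smul_smul, div_eq_inv_mul]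
            rw [Finset.sum_congr rfl h10, ← Finset.smul_sum]
            congr 1
            rw [Finset.sum_congr rfl (fun u (_ : u ∈ T) =>
              add_smul (if u = w then (1:ℚ) else 0) (c (Sum.inl u)) (castQ u)),
              Finset.sum_add_distrib]
            congr 1
            have h9 : ∀ u ∈ T, (if u = w then (1:ℚ) else 0) • castQ u
                = if u = w then castQ u else 0 := by
              intro u _; split <;> simp
            rw [Finset.sum_congr rfl h9, Finset.sum_ite_eq' T w castQ, if_pos hw]
          show castQ g = ∑ u ∈ T, (((if u = w then (1:ℚ) else 0) + c (Sum.inl u)) / δ) • castQ u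
          rw [hgoal, ← key, smul_smul, inv_mul_cancel₀ hδne, one_smul]
      · -- the positivity of `M` forces `w = 0`
        push_neg at hαβ
        set e : ℚ := α - β with he
        have he0 : 0 ≤ e := by rw [he]; linarith
        have keyz : castQ w + (Sig + e • castQ g) = 0 := by
          have h4 : castQ w + (Sig + e • castQ g)
              = -((-castQ w) - (α • castQ g + ((-(β • castQ g)) + Sig))) - (0:Fin d → ℚ) := by
            rw [he, sub_smul]; abel
          rw [h4, sub_eq_zero.mpr hrep', neg_zero, sub_zero]
        set D : ℕ := e.den * ∏ u ∈ T, (c (Sum.inl u)).den with hD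
        have hDpos : 0 < D := by
          rw [hD]
          exact Nat.mul_pos e.pos (Finset.prod_pos fun u _ => Rat.den_pos _)
        have hdvd : ∀ u ∈ T, (c (Sum.inl u)).den ∣ D := fun u hu =>
          Dvd.dvd.mul_left (Finset.dvd_prod_of_mem _ hu) e.den
        have hdvde : e.den ∣ D := dvd_mul_right _ _
        set nn : (Fin d → ℤ) → ℕ := fun u => (D / (c (Sum.inl u)).den) * (c (Sum.inl u)).num.toNat
          with hnn_def
        have hnn : ∀ u ∈ T, ((nn u : ℕ) : ℚ) = (D : ℚ) * c (Sum.inl u) := by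
          intro u hu
          have hk : (c (Sum.inl u)).den * (D / (c (Sum.inl u)).den) = D :=
            Nat.mul_div_cancel' (hdvd u hu)
          have := clear_den (c (Sum.inl u)) (hcT u hu) (D / (c (Sum.inl u)).den)
          rw [hk] at this
          rw [hnn_def, ← this]
        set m : ℕ := (D / e.den) * e.num.toNat with hm_def
        have hm : ((m : ℕ) : ℚ) = (D : ℚ) * e := by
          have hk : e.den * (D / e.den) = D := Nat.mul_div_cancel' hdvde
          have := clear_den e he0 (D / e.den)
          rw [hk] at this
          rw [hm_def, ← this]
        have hzeroQ : castQ (D • w + (∑ u ∈ T, nn u • u + m • g)) = castQ 0 := by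
          rw [map_zero, map_add, map_add, castQ_nsmul, castQ_comb, castQ_nsmul]
          have h6 : ∑ u ∈ T, ((nn u : ℚ)) • castQ u = (D:ℚ) • Sig := by
            rw [hSig, Finset.smul_sum]
            refine Finset.sum_congr rfl fun u hu => ?_
            rw [hnn u hu, ← smul_smul]
          rw [h6, hm, ← smul_smul, ← smul_add, ← smul_add, keyz, smul_zero]
        have hzero : D • w + (∑ u ∈ T, nn u • u + m • g) = 0 := castQ_inj hzeroQ
        have hw0 : w = 0 := by
          have h3z : p • (D • w + (∑ u ∈ T, nn u • u + m • g))
              = (p * D) • w + (∑ u ∈ T, (p * nn u) • u + m • x) := by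
            rw [smul_add, smul_add, smul_smul, hxpg, smul_comm m p g]
            congr 1
            rw [Finset.smul_sum]
            congr 1
            exact Finset.sum_congr rfl fun u _ => smul_smul p (nn u) u
          have hzp : (p * D) • w + (∑ u ∈ T, (p * nn u) • u + m • x) = 0 := by
            rw [← h3z, hzero, smul_zero]
          have hmem1 : (p * D) • w ∈ M := AddSubmonoid.nsmul_mem M (hSM w (hTS hw)) _
          have hmem2 : -((p * D) • w) ∈ M := by
            have hrw : -((p * D) • w) = ∑ u ∈ T, (p * nn u) • u + m • x := by
              rw [neg_eq_iff_add_eq_zero]; exact hzp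
            rw [hrw]
            exact AddSubmonoid.add_mem M
              (AddSubmonoid.sum_mem M fun u hu => AddSubmonoid.nsmul_mem M (hSM u (hTS hu)) _)
              (AddSubmonoid.nsmul_mem M hxM m)
          have hzz := hpos _ hmem1 hmem2
          funext i
          show w i = 0
          have hi : (p * D) • (w i) = (0 : ℤ) := congrFun hzz i
          rw [nsmul_eq_mul] at hi
          have hpD : ((p * D : ℕ) : ℤ) ≠ 0 := by
            have : 0 < p * D := Nat.mul_pos hp0 hDpos
            exact_mod_cast Nat.pos_iff_ne_zero.mp this
          exact (mul_eq_zero.mp hi).resolve_left hpD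
        refine ⟨fun u => (a u : ℚ) / p + (if u = w then 1 else 0), ?_, ?_, ?_⟩
        · intro u hu
          show (0:ℚ) ≤ (a u : ℚ) / p + (if u = w then 1 else 0)
          have h7 : (0:ℚ) ≤ (a u : ℚ) / p := by positivity
          split <;> linarith
        · show (0:ℚ) < (a w : ℚ) / p + (if w = w then 1 else 0)
          rw [if_pos rfl]
          have h7 : (0:ℚ) ≤ (a w : ℚ) / p := by positivity
          linarith
        · show castQ g = ∑ u ∈ T, ((a u : ℚ) / p + (if u = w then 1 else 0)) • castQ u
          rw [Finset.sum_congr rfl fun u (_ : u ∈ T) =>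
            (add_smul ((a u : ℚ) / p) (if u = w then 1 else 0) (castQ u)),
            Finset.sum_add_distrib, ← hgQT]
          have h8 : ∑ u ∈ T, (if u = w then (1:ℚ) else 0) • castQ u = 0 := by
            have h9 : ∀ u ∈ T, (if u = w then (1:ℚ) else 0) • castQ u
                = if u = w then castQ u else 0 := by
              intro u hu; split <;> simp
            rw [Finset.sum_congr rfl h9, Finset.sum_ite_eq' T w castQ, if_pos hw, hw0, map_zero]
          rw [h8, add_zero]
    · -- separation is impossible
      exfalso
      have hl0 : 0 ≤ l ⬝ᵥ castQ g := by
        have := hl _ h0mem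
        simpa [hvOf] using this
      have hl1 : 0 ≤ l ⬝ᵥ (-castQ g) := by
        have := hl _ h1mem
        simp only [hvOf, Sum.elim_inr, if_neg (show (1:Fin 2) ≠ 0 by decide)] at this
        exact this
      have hlg0 : l ⬝ᵥ castQ g = 0 := by
        rw [dotProduct_neg, neg_nonneg] at hl1
        linarith
      have hlT : ∀ u ∈ T, 0 ≤ l ⬝ᵥ castQ u := by
        intro u hu
        have := hl _ (hinlmem u hu)
        simpa [hvOf] using this
      have hlw : 0 < l ⬝ᵥ castQ w := by
        rw [dotProduct_neg] at hlg
        linarith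
      set ℓl : (Fin d → ℝ) →ₗ[ℝ] ℝ := ellOf l with hℓl
      set K : ℝ := ∑ u ∈ S \ T, |ℓl (castR u)| / ℓs (castR u) with hK
      have hK0 : 0 ≤ K := by
        rw [hK]
        refine Finset.sum_nonneg fun u hu => div_nonneg (abs_nonneg _) ?_
        exact le_of_lt (hℓs_posS u (Finset.mem_sdiff.1 hu).1 (Finset.mem_sdiff.1 hu).2)
      set ℓ' : (Fin d → ℝ) →ₗ[ℝ] ℝ := ℓl + K • ℓs with hℓ'
      have hℓ'app : ∀ y, ℓ' y = ℓl y + K * ℓs y := by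
        intro y; rw [hℓ']; rfl
      have hℓ'S : ∀ u ∈ S, 0 ≤ ℓ' (castR u) := by
        intro u huS
        rw [hℓ'app]
        by_cases huT : u ∈ T
        · have h1 : 0 ≤ ℓl (castR u) := by
            rw [hℓl, ellOf_cast]
            exact_mod_cast hlT u huT
          have h2 : 0 ≤ ℓs (castR u) := hℓs_cone _ (cone_mem u (hSM u huS))
          have h3 := mul_nonneg hK0 h2
          linarith
        · have hpos' := hℓs_posS u huS huT
          have hKterm : |ℓl (castR u)| / ℓs (castR u) ≤ K := by
            rw [hK]
            refine Finset.single_le_sum (f := fun v => |ℓl (castR v)| / ℓs (castR v))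
              (fun v hv => div_nonneg (abs_nonneg _) ?_) (Finset.mem_sdiff.2 ⟨huS, huT⟩)
            exact le_of_lt (hℓs_posS v (Finset.mem_sdiff.1 hv).1 (Finset.mem_sdiff.1 hv).2)
          have hKK : |ℓl (castR u)| ≤ K * ℓs (castR u) := by
            rw [div_le_iff₀ hpos'] at hKterm
            linarith [hKterm]
          have := neg_abs_le (ℓl (castR u))
          linarith
      have hℓ'L : ℓ' ∈ L := by
        refine ⟨ell_nonneg_cone ℓ' hℓ'S, ?_⟩
        rw [hℓ'app, hℓl, ellOf_cast, hℓs_g, hlg0]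
        simp
      have hwT := (Finset.mem_filter.1 hw).2
      have hcontra := hwT ℓ' hℓ'L
      rw [hℓ'app, hℓl, ellOf_cast, hℓsT w hw, mul_zero, add_zero] at hcontra
      have : (0:ℝ) < ((l ⬝ᵥ castQ w : ℚ) : ℝ) := by exact_mod_cast hlw
      rw [hcontra] at this
      exact lt_irrefl 0 this
  -- combine the representations into one with all coefficients positive
  have hCw' : ∀ w : Fin d → ℤ, ∃ c : (Fin d → ℤ) → ℚ, w ∈ T →
      ((∀ u ∈ T, 0 ≤ c u) ∧ 0 < c w ∧ castQ g = ∑ u ∈ T, c u • castQ u) := by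
    intro w
    by_cases hw : w ∈ T
    · obtain ⟨c, hc⟩ := hCw w hw
      exact ⟨c, fun _ => hc⟩
    · exact ⟨0, fun h => absurd h hw⟩
  choose cf hcf using hCw'
  set ct : (Fin d → ℤ) → ℚ := fun u => ∑ w ∈ T, cf w u with hct
  have hct_pos : ∀ u ∈ T, 0 < ct u := by
    intro u hu
    rw [hct]
    have h1 : ∀ w ∈ T, 0 ≤ cf w u := fun w hw => (hcf w hw).1 u hu
    calc (0:ℚ) < cf u u := (hcf u hu).2.1
    _ ≤ ∑ w ∈ T, cf w u := Finset.single_le_sum h1 hu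
  have hct_rep : (T.card : ℚ) • castQ g = ∑ u ∈ T, ct u • castQ u := by
    have h1 : ∑ u ∈ T, ct u • castQ u = ∑ w ∈ T, ∑ u ∈ T, cf w u • castQ u := by
      rw [Finset.sum_comm]
      refine Finset.sum_congr rfl fun u _ => ?_
      rw [hct, Finset.sum_smul]
    rw [h1, Finset.sum_congr rfl (fun w hw => ((hcf w hw).2.2).symm), Finset.sum_const,
      ← Nat.cast_smul_eq_nsmul ℚ]
  -- clear denominators
  set D2 : ℕ := ∏ u ∈ T, (ct u).den with hD2
  have hD2pos : 0 < D2 := Finset.prod_pos fun u _ => Rat.den_pos _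
  have hdvd2 : ∀ u ∈ T, (ct u).den ∣ D2 := fun u hu => Finset.dvd_prod_of_mem _ hu
  set nn2 : (Fin d → ℤ) → ℕ := fun u => (D2 / (ct u).den) * (ct u).num.toNat with hnn2_def
  have hnn2 : ∀ u ∈ T, ((nn2 u : ℕ) : ℚ) = (D2 : ℚ) * ct u := by
    intro u hu
    have hk : (ct u).den * (D2 / (ct u).den) = D2 := Nat.mul_div_cancel' (hdvd2 u hu)
    have := clear_den (ct u) (hct_pos u hu).le (D2 / (ct u).den)
    rw [hk] at this
    rw [hnn2_def, ← this]
  have hnn2pos : ∀ u ∈ T, 1 ≤ nn2 u := by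
    intro u hu
    rcases Nat.eq_zero_or_pos (nn2 u) with h0 | h1
    · exfalso
      have h2 := hnn2 u hu
      rw [h0] at h2
      have h3 : (0:ℚ) < (D2 : ℚ) * ct u := by
        refine mul_pos ?_ (hct_pos u hu)
        exact_mod_cast hD2pos
      rw [← h2] at h3
      norm_num at h3
    · exact h1
  set q : ℕ := T.card * D2 with hqdef
  have hq1 : 0 < q := Nat.mul_pos (Finset.card_pos.mpr hTne) hD2pos
  have hqrep : q • g = ∑ u ∈ T, nn2 u • u := by
    apply castQ_inj
    rw [castQ_nsmul, castQ_comb, hqdef]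
    push_cast
    rw [mul_comm (T.card : ℚ) (D2 : ℚ), ← smul_smul, hct_rep, Finset.smul_sum]
    refine Finset.sum_congr rfl fun u hu => ?_
    rw [smul_smul, ← hnn2 u hu]
  -- all large multiples of `g` lie in `M`
  set Z : ℕ := ∑ u ∈ T, (z u).natAbs with hZdef
  have hZ : ∀ u ∈ T, (z u).natAbs ≤ Z := fun u hu =>
    Finset.single_le_sum (f := fun u => (z u).natAbs) (fun _ _ => Nat.zero_le _) hu
  set N : ℕ := q * (q * Z + 1) with hNdef
  have hbig : ∀ k : ℕ, N ≤ k → k • g ∈ M := by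
    intro k hk
    set t : ℕ := k / q with ht
    set r : ℕ := k % q with hr
    have hkeq : q * t + r = k := Nat.div_add_mod k q
    have htZ : q * Z < t := by
      rw [ht]
      have h1 : (q * Z + 1) * q ≤ k := by
        rw [mul_comm]
        omega
      have := (Nat.le_div_iff_mul_le hq1).mpr h1
      omega
    have hrq : r < q := Nat.mod_lt _ hq1
    set e : (Fin d → ℤ) → ℤ := fun u => (r : ℤ) * z u + (t : ℤ) * (nn2 u : ℤ) with hedef
    have he0 : ∀ u ∈ T, 0 ≤ e u := by
      intro u hu
      have h1 : ((z u).natAbs : ℤ) ≤ (Z : ℤ) := by exact_mod_cast hZ u hu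
      have h2 : -(Z : ℤ) ≤ z u ∧ z u ≤ (Z : ℤ) := by
        have habs : |z u| ≤ (Z : ℤ) := by rw [Int.abs_eq_natAbs]; exact_mod_cast h1
        exact abs_le.mp habs
      have h3 : (1 : ℤ) ≤ (nn2 u : ℤ) := by exact_mod_cast hnn2pos u hu
      have h4 : (r : ℤ) < (q : ℤ) := by exact_mod_cast hrq
      have h5 : (q : ℤ) * (Z : ℤ) < (t : ℤ) := by exact_mod_cast htZ
      have h6 : (0 : ℤ) ≤ (r : ℤ) := Int.natCast_nonneg r
      have hZ0 : (0 : ℤ) ≤ (Z : ℤ) := Int.natCast_nonneg Z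
      have p1 : (r : ℤ) * (-(Z : ℤ)) ≤ (r : ℤ) * z u := mul_le_mul_of_nonneg_left h2.1 h6
      have p2 : (t : ℤ) * 1 ≤ (t : ℤ) * (nn2 u : ℤ) :=
        mul_le_mul_of_nonneg_left h3 (Int.natCast_nonneg t)
      have p3 : (r : ℤ) * (Z : ℤ) ≤ (q : ℤ) * (Z : ℤ) :=
        mul_le_mul_of_nonneg_right h4.le hZ0
      show (0:ℤ) ≤ (r : ℤ) * z u + (t : ℤ) * (nn2 u : ℤ)
      have hp1' : (r : ℤ) * (-(Z : ℤ)) = -((r:ℤ) * (Z:ℤ)) := by ring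
      rw [hp1'] at p1
      linarith
    have hke : k • g = ∑ u ∈ T, e u • u := by
      have h1 : k • g = (q * t) • g + r • g := by rw [← hkeq, add_nsmul]
      have h2 : (q * t) • g = t • (q • g) := by rw [mul_nsmul]
      have h3 : t • (q • g) = ∑ u ∈ T, ((t : ℤ) * (nn2 u : ℤ)) • u := by
        rw [hqrep, Finset.smul_sum]
        refine Finset.sum_congr rfl fun u hu => ?_
        rw [← natCast_zsmul, ← natCast_zsmul u (nn2 u), smul_smul]
      have h4 : r • g = ∑ u ∈ T, ((r : ℤ) * z u) • u := by
        rw [hz, Finset.smul_sum]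
        refine Finset.sum_congr rfl fun u hu => ?_
        rw [← natCast_zsmul, smul_smul]
      rw [h1, h2, h3, h4, ← Finset.sum_add_distrib]
      refine Finset.sum_congr rfl fun u hu => ?_
      rw [hedef, add_smul]
      abel
    rw [hke]
    refine AddSubmonoid.sum_mem M fun u hu => ?_
    have h5 : e u • u = (e u).toNat • u := by
      rw [← natCast_zsmul u ((e u).toNat), Int.toNat_of_nonneg (he0 u hu)]
    rw [h5]
    exact AddSubmonoid.nsmul_mem M (hSM u (hTS hu)) _
  -- downward induction using seminormality
  have down : ∀ j : ℕ, ∀ n : ℕ, 1 ≤ n → N ≤ n + j → n • g ∈ M := by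
    intro j
    induction j with
    | zero =>
      intro n h1 h2
      exact hbig n (by omega)
    | succ j ih =>
      intro n h1 h2
      by_cases hn : N ≤ n
      · exact hbig n hn
      · refine hsn (n • g) (nsmul_mem hg n) ?_ ?_
        · rw [smul_smul]
          exact ih (2 * n) (by omega) (by omega)
        · rw [smul_smul]
          exact ih (3 * n) (by omega) (by omega)
  have h1g := down N 1 le_rfl (by omega)
  simpa using h1g
end

section
/- Let M ⊆ ℤ² be the monoid generated by x = (3,0), y = (3,1), z = (3,3) and let a = (0,−1). In the monoid algebra A = k[M] over a field k, localized at the multiplicative set of monomials of M (giving A_C = k[ℤM]), the degree-a graded component of A_C is nonzero (it contains t^x/t^y), while the degree-a components of the localizations A_x (at t^x) and A_z (at t^z) are both zero. -/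
private lemma memM_inv {u : Fin 2 → ℤ}
    (hu : u ∈ AddSubmonoid.closure ({![3,0],![3,1],![3,3]} : Set (Fin 2 → ℤ))) :
    0 ≤ u 1 ∧ (u 1 + 2 ≤ u 0 ∨ u 1 = u 0) := by
  induction hu using AddSubmonoid.closure_induction with
  | mem x hx =>
      rcases hx with rfl | rfl | rfl <;> norm_num
  | zero => norm_num
  | add x y hx hy ihx ihy =>
      simp only [Pi.add_apply]
      omega

private lemma inter_bot {k : Type} [Field k] (S : Set (AddMonoidAlgebra k (Fin 2 → ℤ)))
    (a : Fin 2 → ℤ)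
    (h : ∀ f ∈ S, f.coeff a = 0) :
    Submodule.span k S ⊓ Submodule.span k {AddMonoidAlgebra.single a (1:k)} = ⊥ := by
  rw [eq_bot_iff]
  intro w hw
  obtain ⟨hw1, hw2⟩ := Submodule.mem_inf.mp hw
  rw [Submodule.mem_span_singleton] at hw2
  obtain ⟨c, rfl⟩ := hw2
  have key : ∀ g ∈ Submodule.span k S, (g : AddMonoidAlgebra k (Fin 2 → ℤ)).coeff a = 0 := by
    intro g hg
    induction hg using Submodule.span_induction with
    | mem f hf => exact h f hf
    | zero => simp
    | add f g _ _ ihf ihg =>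
        exact (Finsupp.add_apply f.coeff g.coeff a).trans (by rw [ihf, ihg, add_zero])
    | smul c f _ ihf =>
        exact (Finsupp.smul_apply c f.coeff a).trans (by rw [ihf, smul_zero])
  have := key _ hw1
  have hc : c = 0 := by
    have h2 := (Finsupp.smul_apply c (AddMonoidAlgebra.single a (1:k)).coeff a).symm.trans this
    simpa [AddMonoidAlgebra.coeff_single, Finsupp.single_eq_same] using h2
  simp [hc]


/-- For the monoid `M ⊆ ℤ²` generated by `x=(3,0)`, `y=(3,1)`, `z=(3,3)` and `a=(0,−1)`:
inside the Laurent algebra `B = k[ℤ²]` (whose degree-`a` component is `k·t^a`), the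
localization `A_C = k[ℤM]` (spanned by monomials `t^(u−v)`, `u,v ∈ M`) has nonzero
degree-`a` component (it contains `t^x/t^y = t^a`), while the localizations `A_x`
(spanned by `t^(u−n·x)`) and `A_z` (spanned by `t^(u−n·z)`) have zero degree-`a`
components. -/
theorem stmt_15 (k : Type) [Field k] :
    let M : AddSubmonoid (Fin 2 → ℤ) :=
      AddSubmonoid.closure {![3, 0], ![3, 1], ![3, 3]}
    let a : Fin 2 → ℤ := ![0, -1]
    let AC : Submodule k (AddMonoidAlgebra k (Fin 2 → ℤ)) :=
      Submodule.span k
        {f | ∃ u ∈ M, ∃ v ∈ M, f = AddMonoidAlgebra.single (u - v) (1 : k)}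
    let Ax : Submodule k (AddMonoidAlgebra k (Fin 2 → ℤ)) :=
      Submodule.span k
        {f | ∃ u ∈ M, ∃ n : ℕ, f = AddMonoidAlgebra.single (u - n • ![3, 0]) (1 : k)}
    let Az : Submodule k (AddMonoidAlgebra k (Fin 2 → ℤ)) :=
      Submodule.span k
        {f | ∃ u ∈ M, ∃ n : ℕ, f = AddMonoidAlgebra.single (u - n • ![3, 3]) (1 : k)}
    (AddMonoidAlgebra.single a (1 : k) ∈ AC ∧ AddMonoidAlgebra.single a (1 : k) ≠ 0) ∧
    Ax ⊓ Submodule.span k {AddMonoidAlgebra.single a (1 : k)} = ⊥ ∧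
    Az ⊓ Submodule.span k {AddMonoidAlgebra.single a (1 : k)} = ⊥ := by
  intro M a AC Ax Az
  refine ⟨⟨?_, ?_⟩, ?_, ?_⟩
  · apply Submodule.subset_span
    refine ⟨![3,0], AddSubmonoid.subset_closure (by simp), ![3,1],
      AddSubmonoid.subset_closure (by simp), ?_⟩
    congr 1
    funext i
    fin_cases i <;> simp [a]
  · simp [AddMonoidAlgebra.single_eq_zero]
  · apply inter_bot
    rintro f ⟨u, hu, n, rfl⟩
    apply Finsupp.single_eq_of_ne
    intro h
    have h1 := congrFun h 1
    have := (memM_inv hu).1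
    simp [a, Pi.sub_apply, Pi.smul_apply] at h1
    omega
  · apply inter_bot
    rintro f ⟨u, hu, n, rfl⟩
    apply Finsupp.single_eq_of_ne
    intro h
    have h0 := congrFun h 0
    have h1 := congrFun h 1
    have := memM_inv hu
    simp [a, Pi.sub_apply, Pi.smul_apply] at h0 h1
    omega
end
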